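/- Let C be a braided monoidal category, let A₁, A₂ be half-braided algebras in C (algebra objects (Aᵢ, mᵢ, ηᵢ) equipped with half-braidings tⁱ satisfying t_X ∘ (m ⊗ id_X) ∘ (id_A ⊗ c⁻¹_{X,A}) = (id_X ⊗ m) ∘ (t_X ⊗ id_A) evaluated appropriately, and the dual condition with c_{A,X}). Then the braided tensor product A₁ ⊗̃ A₂, equipped with the half-braiding t¹·²_X = (t¹_X ⊗ id_{A₂}) ∘ (id_{A₁} ⊗ t²_X), is again a half-braided algebra. -/

import Mathlib

open CategoryTheory MonoidalCategory

variable {C : Type*} [Category C] [MonoidalCategory C]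

/-- `(A, mul, one)` is an algebra object in the monoidal category `C`. -/
structure IsMonObj (A : C) (mul : A ⊗ A ⟶ A) (one : 𝟙_ C ⟶ A) : Prop where
  one_mul : (one ▷ A) ≫ mul = (λ_ A).hom
  mul_one : (A ◁ one) ≫ mul = (ρ_ A).hom
  mul_assoc : (mul ▷ A) ≫ mul = (α_ A A A).hom ≫ (A ◁ mul) ≫ mul

/-- The family `t X : V ⊗ X ⟶ X ⊗ V` is a half-braiding for `V`: a natural isomorphism
`V ⊗ - ≅ - ⊗ V` satisfying `t_{X⊗Y} = (id_X ⊗ t_Y) ∘ (t_X ⊗ id_Y)` (written with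
associators). -/
structure IsHalfBraiding (V : C) (t : ∀ X : C, V ⊗ X ⟶ X ⊗ V) : Prop where
  isIso : ∀ X : C, IsIso (t X)
  naturality : ∀ {X Y : C} (f : X ⟶ Y), (V ◁ f) ≫ t Y = t X ≫ (f ▷ V)
  tensor : ∀ X Y : C, t (X ⊗ Y) =
    (α_ V X Y).inv ≫ (t X ▷ Y) ≫ (α_ X V Y).hom ≫ (X ◁ t Y) ≫ (α_ X Y V).inv

variable [BraidedCategory C]

/-- `(A, t, mul, one)` is a *half-braided algebra* in the braided category `C` (Def. 3.1 of
Costantino–Faitg): `(A, t)` lies in the Drinfeld center, `(A, mul, one)` is an algebra, and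
the multiplication satisfies
`m ∈ Hom_{Z(C)}((A,t) ⊗ (A, c⁻¹_{-,A}), (A,t))` and
`m ∈ Hom_{Z(C)}((A, c_{A,-}) ⊗ (A,t), (A,t))`. -/
structure IsHalfBraidedAlg (A : C) (mul : A ⊗ A ⟶ A) (one : 𝟙_ C ⟶ A)
    (t : ∀ X : C, A ⊗ X ⟶ X ⊗ A) : Prop where
  mon : IsMonObj A mul one
  hb : IsHalfBraiding A t
  compat₁ : ∀ X : C, (mul ▷ X) ≫ t X =
    (α_ A A X).hom ≫ (A ◁ (β_ X A).inv) ≫ (α_ A X A).inv ≫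
      (t X ▷ A) ≫ (α_ X A A).hom ≫ (X ◁ mul)
  compat₂ : ∀ X : C, (mul ▷ X) ≫ t X =
    (α_ A A X).hom ≫ (A ◁ t X) ≫ (α_ A X A).inv ≫
      ((β_ A X).hom ▷ A) ≫ (α_ X A A).hom ≫ (X ◁ mul)

/-- The half-braiding on a tensor product, as in the Drinfeld center:
`t¹·²_X = (t¹_X ⊗ id_{A₂}) ∘ (id_{A₁} ⊗ t²_X)`. -/
def tensorHalfBraiding (A₁ A₂ : C) (t₁ : ∀ X : C, A₁ ⊗ X ⟶ X ⊗ A₁)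
    (t₂ : ∀ X : C, A₂ ⊗ X ⟶ X ⊗ A₂) (X : C) : (A₁ ⊗ A₂) ⊗ X ⟶ X ⊗ (A₁ ⊗ A₂) :=
  (α_ A₁ A₂ X).hom ≫ (A₁ ◁ t₂ X) ≫ (α_ A₁ X A₂).inv ≫ (t₁ X ▷ A₂) ≫ (α_ X A₁ A₂).hom


namespace HalfBraidedAux

open BraidedCategory Center

variable {C : Type*} [Category C] [MonoidalCategory C] [BraidedCategory C]

theorem yb1 {A₁ A₂ U : C} (t : A₂ ⊗ U ⟶ U ⊗ A₂) :
    (β_ A₂ A₁).hom ▷ U ≫ (α_ A₁ A₂ U).hom ≫ A₁ ◁ t ≫ (α_ A₁ U A₂).inv ≫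
      (β_ U A₁).inv ▷ A₂ ≫ (α_ U A₁ A₂).hom
    = (α_ A₂ A₁ U).hom ≫ A₂ ◁ (β_ U A₁).inv ≫ (α_ A₂ U A₁).inv ≫ t ▷ A₁ ≫
      (α_ U A₂ A₁).hom ≫ U ◁ (β_ A₂ A₁).hom := by
  have h := braiding_naturality_left t A₁
  rw [braiding_tensor_left_hom, braiding_tensor_left_hom] at h
  rw [← cancel_mono ((α_ U A₁ A₂).inv ≫ ((β_ U A₁).hom ▷ A₂) ≫ (α_ A₁ U A₂).hom),
      ← cancel_epi ((A₂ ◁ (β_ U A₁).hom) ≫ (α_ A₂ A₁ U).inv)]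
  simp only [Category.assoc, Iso.hom_inv_id_assoc, Iso.inv_hom_id_assoc,
    inv_hom_whiskerRight_assoc, hom_inv_whiskerRight_assoc,
    MonoidalCategory.whiskerLeft_comp, MonoidalCategory.whiskerLeft_comp_assoc] at h ⊢
  rw [h]
  simp

theorem yb2 {A₁ A₂ U : C} (t : A₁ ⊗ U ⟶ U ⊗ A₁) :
    (β_ A₂ A₁).hom ▷ U ≫ (α_ A₁ A₂ U).hom ≫ A₁ ◁ (β_ A₂ U).hom ≫ (α_ A₁ U A₂).inv ≫
      t ▷ A₂ ≫ (α_ U A₁ A₂).hom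
    = (α_ A₂ A₁ U).hom ≫ A₂ ◁ t ≫ (α_ A₂ U A₁).inv ≫ (β_ A₂ U).hom ▷ A₁ ≫
      (α_ U A₂ A₁).hom ≫ U ◁ (β_ A₂ A₁).hom := by
  have h := braiding_naturality_right A₂ t
  rw [braiding_tensor_right_hom, braiding_tensor_right_hom] at h
  rw [← cancel_epi ((α_ A₂ A₁ U).inv), ← cancel_mono ((α_ U A₁ A₂).inv)]
  simp only [Category.assoc, Iso.inv_hom_id_assoc, Iso.hom_inv_id, Category.comp_id] at h ⊢
  exact h.symm

/-- Package an `IsHalfBraiding` into Mathlib's `HalfBraiding`. -/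
noncomputable def toHalfBraiding {A : C} {t : ∀ X : C, A ⊗ X ⟶ X ⊗ A}
    (h : IsHalfBraiding A t) : HalfBraiding A where
  β U := @asIso _ _ _ _ (t U) (h.isIso U)
  monoidal U U' := by simpa using h.tensor U U'
  naturality f := by simpa using h.naturality f

/-- The center object associated to an `IsHalfBraiding`. -/
noncomputable def ctrObj {A : C} {t : ∀ X : C, A ⊗ X ⟶ X ⊗ A}
    (h : IsHalfBraiding A t) : Center C := ⟨A, toHalfBraiding h⟩

omit [BraidedCategory C] in
@[simp] theorem ctrObj_fst {A : C} {t : ∀ X : C, A ⊗ X ⟶ X ⊗ A}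
    (h : IsHalfBraiding A t) : (ctrObj h).1 = A := rfl

omit [BraidedCategory C] in
@[simp] theorem ctrObj_β_hom {A : C} {t : ∀ X : C, A ⊗ X ⟶ X ⊗ A}
    (h : IsHalfBraiding A t) (U : C) : ((ctrObj h).2.β U).hom = t U := rfl

/-- The center object with half-braiding given by the inverse of the braiding. -/
def invBraidedObj (X : C) : Center C :=
  ⟨X, { β := fun U => (β_ U X).symm
        monoidal := fun U U' => by simp
        naturality := fun f => by simp }⟩

@[simp] theorem invBraidedObj_fst (X : C) : (invBraidedObj X).1 = X := rfl
@[simp] theorem invBraidedObj_β (X U : C) :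
    (invBraidedObj X).2.β U = (β_ U X).symm := rfl

variable {A : C} {m : A ⊗ A ⟶ A} {η : 𝟙_ C ⟶ A} {t : ∀ X : C, A ⊗ X ⟶ X ⊗ A}

/-- `compat₁` says the multiplication is a center morphism. -/
noncomputable def mulHomInv (h : IsHalfBraidedAlg A m η t) :
    ctrObj h.hb ⊗ invBraidedObj A ⟶ ctrObj h.hb where
  f := m
  comm U := by
    simpa [Category.assoc] using h.compat₁ U

/-- `compat₂` says the multiplication is a center morphism. -/
noncomputable def mulHomBr (h : IsHalfBraidedAlg A m η t) :
    Center.ofBraidedObj A ⊗ ctrObj h.hb ⟶ ctrObj h.hb where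
  f := m
  comm U := by
    simp only [Center.tensor_β, Iso.trans_hom]
    erw [Category.assoc, Category.assoc, Category.assoc, Category.assoc]
    exact h.compat₂ U

/-- The braiding `c_{Z, A}` is a center morphism from `Z ⊗ invBraidedObj A`. -/
def swapInv (A : C) (Z : Center C) : Z ⊗ invBraidedObj A ⟶ invBraidedObj A ⊗ Z where
  f := (β_ Z.1 A).hom
  comm U := by
    simpa [Category.assoc] using yb1 (A₁ := A) ((Z.2.β U).hom)

/-- The braiding `c_{A, Z}` is a center morphism from `ofBraidedObj A ⊗ Z`. -/
def swapBr (A : C) (Z : Center C) : Center.ofBraidedObj A ⊗ Z ⟶ Z ⊗ Center.ofBraidedObj A where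
  f := (β_ A Z.1).hom
  comm U := by
    simp only [Center.tensor_β, Iso.trans_hom]
    erw [Category.assoc, Category.assoc, Category.assoc, Category.assoc]
    exact yb2 (A₂ := A) ((Z.2.β U).hom)

/-- The comparison morphism `invBraidedObj (X ⊗ Y) ⟶ invBraidedObj X ⊗ invBraidedObj Y`. -/
def invSplit (X Y : C) : invBraidedObj (X ⊗ Y) ⟶ invBraidedObj X ⊗ invBraidedObj Y where
  f := 𝟙 _
  comm U := by simp

/-- The comparison morphism `ofBraidedObj (X ⊗ Y) ⟶ ofBraidedObj X ⊗ ofBraidedObj Y`. -/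
def brSplit (X Y : C) : Center.ofBraidedObj (X ⊗ Y) ⟶
    Center.ofBraidedObj X ⊗ Center.ofBraidedObj Y where
  f := 𝟙 _
  comm U := by
    simp only [Center.tensor_β, Iso.trans_hom]
    dsimp only [Center.ofBraidedObj]
    erw [MonoidalCategory.id_whiskerRight, MonoidalCategory.whiskerLeft_id, Category.id_comp,
      Category.comp_id]
    simp
    rfl

end HalfBraidedAux

open HalfBraidedAux Center in
set_option maxHeartbeats 1600000 in

/-- If `A₁` and `A₂` are half-braided algebras in a braided monoidal
category `C`, then the braided tensor product `A₁ ⊗̃ A₂` (underlying object `A₁ ⊗ A₂`,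
multiplication `(m₁ ⊗ m₂) ∘ (id ⊗ c_{A₂,A₁} ⊗ id)`, unit `η₁ ⊗ η₂`), equipped with the
tensored half-braiding `t¹·²_X = (t¹_X ⊗ id) ∘ (id ⊗ t²_X)`, is again a half-braided
algebra. -/
theorem braidedTensorProduct_isHalfBraidedAlg
    {A₁ A₂ : C} {m₁ : A₁ ⊗ A₁ ⟶ A₁} {η₁ : 𝟙_ C ⟶ A₁} {t₁ : ∀ X : C, A₁ ⊗ X ⟶ X ⊗ A₁}
    {m₂ : A₂ ⊗ A₂ ⟶ A₂} {η₂ : 𝟙_ C ⟶ A₂} {t₂ : ∀ X : C, A₂ ⊗ X ⟶ X ⊗ A₂}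
    (h₁ : IsHalfBraidedAlg A₁ m₁ η₁ t₁) (h₂ : IsHalfBraidedAlg A₂ m₂ η₂ t₂) :
    IsHalfBraidedAlg (A₁ ⊗ A₂)
      (tensorμ A₁ A₂ A₁ A₂ ≫ (m₁ ⊗ₘ m₂))
      ((λ_ (𝟙_ C)).inv ≫ (η₁ ⊗ₘ η₂))
      (tensorHalfBraiding A₁ A₂ t₁ t₂) :=  by
  have hmon₁ := h₁.mon
  have hmon₂ := h₂.mon
  letI M₁ : MonObj A₁ := ⟨η₁, m₁, hmon₁.one_mul, hmon₁.mul_one, hmon₁.mul_assoc⟩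
  letI M₂ : MonObj A₂ := ⟨η₂, m₂, hmon₂.one_mul, hmon₂.mul_one, hmon₂.mul_assoc⟩
  have hβ : ∀ X : C, ((ctrObj h₁.hb ⊗ ctrObj h₂.hb).2.β X).hom
      = tensorHalfBraiding A₁ A₂ t₁ t₂ X := by
    intro X
    simp [tensorHalfBraiding]
  constructor
  · exact { one_mul := MonObj.Mon_tensor_one_mul A₁ A₂
            mul_one := MonObj.Mon_tensor_mul_one A₁ A₂
            mul_assoc := MonObj.Mon_tensor_mul_assoc A₁ A₂ }
  · constructor
    · intro X
      rw [← hβ]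
      exact Iso.isIso_hom _
    · intro X Y f
      have := (ctrObj h₁.hb ⊗ ctrObj h₂.hb).2.naturality f
      rwa [hβ, hβ] at this
    · intro X Y
      have := (ctrObj h₁.hb ⊗ ctrObj h₂.hb).2.monoidal X Y
      rwa [hβ, hβ, hβ] at this
  · -- compat₁
    intro X
    let Φ : (ctrObj h₁.hb ⊗ ctrObj h₂.hb) ⊗ invBraidedObj (A₁ ⊗ A₂) ⟶
        ctrObj h₁.hb ⊗ ctrObj h₂.hb :=
      ((ctrObj h₁.hb ⊗ ctrObj h₂.hb) ◁ invSplit A₁ A₂) ≫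
        (α_ (ctrObj h₁.hb) (ctrObj h₂.hb) (invBraidedObj A₁ ⊗ invBraidedObj A₂)).hom ≫
        (ctrObj h₁.hb ◁ (α_ (ctrObj h₂.hb) (invBraidedObj A₁) (invBraidedObj A₂)).inv) ≫
        (ctrObj h₁.hb ◁ (swapInv A₁ (ctrObj h₂.hb) ▷ invBraidedObj A₂)) ≫
        (ctrObj h₁.hb ◁ (α_ (invBraidedObj A₁) (ctrObj h₂.hb) (invBraidedObj A₂)).hom) ≫
        (α_ (ctrObj h₁.hb) (invBraidedObj A₁) (ctrObj h₂.hb ⊗ invBraidedObj A₂)).inv ≫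
        (mulHomInv h₁ ⊗ₘ mulHomInv h₂)
    have hf : Φ.f = tensorμ A₁ A₂ A₁ A₂ ≫ (m₁ ⊗ₘ m₂) := by
      simp [Φ, tensorμ, invSplit, swapInv, mulHomInv]
    have hc := Φ.comm X
    rw [hf] at hc
    simp only [Center.tensor_β, Iso.trans_hom, whiskerLeftIso_hom, Iso.symm_hom,
      whiskerRightIso_hom, invBraidedObj_β, invBraidedObj_fst, Center.tensor_fst,
      ctrObj_fst, ctrObj_β_hom, Category.assoc, hβ] at hc
    simp only [tensorHalfBraiding, Category.assoc]
    simpa [Category.assoc] using hc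
  · -- compat₂
    intro X
    let Ψ : ofBraidedObj (A₁ ⊗ A₂) ⊗ (ctrObj h₁.hb ⊗ ctrObj h₂.hb) ⟶
        ctrObj h₁.hb ⊗ ctrObj h₂.hb :=
      (brSplit A₁ A₂ ▷ (ctrObj h₁.hb ⊗ ctrObj h₂.hb)) ≫
        (α_ (ofBraidedObj A₁) (ofBraidedObj A₂) (ctrObj h₁.hb ⊗ ctrObj h₂.hb)).hom ≫
        (ofBraidedObj A₁ ◁ (α_ (ofBraidedObj A₂) (ctrObj h₁.hb) (ctrObj h₂.hb)).inv) ≫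
        (ofBraidedObj A₁ ◁ (swapBr A₂ (ctrObj h₁.hb) ▷ ctrObj h₂.hb)) ≫
        (ofBraidedObj A₁ ◁ (α_ (ctrObj h₁.hb) (ofBraidedObj A₂) (ctrObj h₂.hb)).hom) ≫
        (α_ (ofBraidedObj A₁) (ctrObj h₁.hb) (ofBraidedObj A₂ ⊗ ctrObj h₂.hb)).inv ≫
        (mulHomBr h₁ ⊗ₘ mulHomBr h₂)
    have hf : Ψ.f = tensorμ A₁ A₂ A₁ A₂ ≫ (m₁ ⊗ₘ m₂) := by
      simp [Ψ, tensorμ, brSplit, swapBr, mulHomBr]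
      dsimp only [Center.ofBraidedObj]
      simp
    have hc := Ψ.comm X
    rw [hf] at hc
    simp only [Center.tensor_β, Iso.trans_hom, whiskerLeftIso_hom, Iso.symm_hom,
      whiskerRightIso_hom, Center.ofBraidedObj_snd_β, Center.tensor_fst,
      Center.ofBraidedObj_fst, ctrObj_fst, ctrObj_β_hom, Category.assoc, hβ] at hc
    dsimp only [Center.ofBraidedObj] at hc
    simp only [tensorHalfBraiding, Category.assoc]
    simpa [Category.assoc] using hc
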